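/- Let X, Y be real symmetric n×n matrices with X positive definite and M_{XY} = [[X² + Y², Y],[Y, I]]. Then the spectrum of the complex 2n×2n matrix J·M_{XY} is {iω : ω is an eigenvalue of X} ∪ {−iω : ω is an eigenvalue of X}; in other words, the symplectic eigenvalues of the positive definite matrix M_{XY} are exactly the eigenvalues ω_1, …, ω_n of X. -/

import Mathlib

open Matrix

/-- The standard symplectic matrix `J = [[0, I],[−I, 0]]`. -/
def stdJ (n : ℕ) : Matrix (Fin n ⊕ Fin n) (Fin n ⊕ Fin n) ℝ :=
  fromBlocks 0 1 (-1) 0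

/-- The Fermi matrix `M_{XY} = [[X² + Y², Y],[Y, I]]`. -/
def fermiMatrix {n : ℕ} (X Y : Matrix (Fin n) (Fin n) ℝ) :
    Matrix (Fin n ⊕ Fin n) (Fin n ⊕ Fin n) ℝ :=
  fromBlocks (X * X + Y * Y) Y Y 1

section Aux

variable {m : Type*} [Fintype m] [DecidableEq m]

/-- Spectrum membership for a matrix over a field, via the determinant. -/
lemma aux_mem_spectrum_iff_det {K : Type*} [Field K] (A : Matrix m m K) (μ : K) :
    μ ∈ spectrum K A ↔ (μ • (1 : Matrix m m K) - A).det = 0 := by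
  rw [spectrum.mem_iff, Algebra.algebraMap_eq_smul_one, Matrix.isUnit_iff_isUnit_det,
    isUnit_iff_ne_zero, not_not]

lemma aux_smul_one_sub_map (A : Matrix m m ℝ) (ω : ℝ) :
    (ω : ℂ) • (1 : Matrix m m ℂ) - A.map Complex.ofReal
      = ((ω • 1 - A).map Complex.ofReal) := by
  ext i j
  by_cases h : i = j <;>
    simp [Matrix.map_apply, Matrix.one_apply, h]

/-- A real `ω` is a complex eigenvalue of `A.map ofReal` iff it is a real eigenvalue of `A`. -/
lemma aux_real_mem_spectrum_iff (A : Matrix m m ℝ) (ω : ℝ) :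
    (ω : ℂ) ∈ spectrum ℂ (A.map Complex.ofReal) ↔ ω ∈ spectrum ℝ A := by
  rw [aux_mem_spectrum_iff_det, aux_mem_spectrum_iff_det, aux_smul_one_sub_map,
    show ((ω • 1 - A).map Complex.ofReal) = Complex.ofRealHom.mapMatrix (ω • 1 - A) from rfl,
    ← RingHom.map_det Complex.ofRealHom]
  exact Complex.ofReal_eq_zero

lemma aux_isHermitian_map {A : Matrix m m ℝ} (hA : A.IsSymm) :
    (A.map Complex.ofReal).IsHermitian := by
  ext i j
  simp only [Matrix.conjTranspose_apply, Matrix.map_apply]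
  rw [show A j i = A i j from congrFun (congrFun hA i) j]
  exact Complex.conj_ofReal _

/-- The complex spectrum of a Hermitian matrix is the range of its (real) eigenvalues. -/
lemma aux_spectrum_hermitian {A : Matrix m m ℂ} (hA : A.IsHermitian) :
    spectrum ℂ A = Set.range (fun i => (hA.eigenvalues i : ℂ)) := by
  conv_lhs => rw [hA.spectral_theorem, Unitary.conjStarAlgAut_apply, Unitary.spectrum_star_right_conjugate,
    spectrum_diagonal]
  rfl

/-- For a real symmetric matrix, the complex spectrum of its complexification is the image
of its real spectrum. -/
lemma aux_spectrum_map_eq {A : Matrix m m ℝ} (hA : A.IsSymm) :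
    spectrum ℂ (A.map Complex.ofReal) = (fun ω : ℝ => (ω : ℂ)) '' spectrum ℝ A := by
  ext ν
  constructor
  · intro hν
    rw [aux_spectrum_hermitian (aux_isHermitian_map hA)] at hν
    obtain ⟨i, hi⟩ := hν
    refine ⟨(aux_isHermitian_map hA).eigenvalues i, ?_, hi⟩
    rw [← aux_real_mem_spectrum_iff,
      aux_spectrum_hermitian (aux_isHermitian_map hA)]
    exact ⟨i, rfl⟩
  · rintro ⟨ω, hω, rfl⟩
    exact (aux_real_mem_spectrum_iff A ω).2 hω

lemma aux_det_conj {A B T : Matrix m m ℂ} (hT : T.det ≠ 0) (h : T * A = B * T) (μ : ℂ) :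
    (μ • 1 - A).det = 0 ↔ (μ • 1 - B).det = 0 := by
  have key : T * (μ • 1 - A) = (μ • 1 - B) * T := by
    rw [Matrix.mul_sub, Matrix.sub_mul, h, Matrix.mul_smul, Matrix.smul_mul, Matrix.mul_one,
      Matrix.one_mul]
  have hdet : T.det * (μ • 1 - A).det = (μ • 1 - B).det * T.det := by
    rw [← Matrix.det_mul, ← Matrix.det_mul, key]
  constructor
  · intro h0
    rcases mul_eq_zero.1 (hdet.symm.trans (by rw [h0, mul_zero])) with h1 | h1
    · exact h1
    · exact absurd h1 hT
  · intro h0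
    rcases mul_eq_zero.1 (hdet.trans (by rw [h0, zero_mul])) with h1 | h1
    · exact absurd h1 hT
    · exact h1

lemma aux_det_smul_shift (μ c : ℂ) (hc : c ≠ 0) (A : Matrix m m ℂ) :
    (μ • (1 : Matrix m m ℂ) - c • A).det = 0 ↔
      ((c⁻¹ * μ) • (1 : Matrix m m ℂ) - A).det = 0 := by
  have key : μ • (1 : Matrix m m ℂ) - c • A = c • ((c⁻¹ * μ) • (1 : Matrix m m ℂ) - A) := by
    rw [smul_sub, smul_smul, ← mul_assoc, mul_inv_cancel₀ hc, one_mul]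
  rw [key, Matrix.det_smul, mul_eq_zero]
  simp [pow_eq_zero_iff', hc]

lemma aux_eq_neg_I_mul (a b : ℂ) : a = -Complex.I * b ↔ b = Complex.I * a := by
  constructor <;> rintro rfl
  · simp [← mul_assoc, mul_neg, Complex.I_mul_I]
  · simp [← mul_assoc, neg_mul, Complex.I_mul_I]

lemma aux_eq_I_mul (a b : ℂ) : a = Complex.I * b ↔ b = -(Complex.I * a) := by
  constructor <;> rintro rfl
  · simp [← mul_assoc, Complex.I_mul_I]
  · simp [← mul_assoc, mul_neg, Complex.I_mul_I]

end Aux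

/-- The spectrum of `J·M_{XY}` (as a complex matrix) is
`{iω : ω eigenvalue of X} ∪ {−iω : ω eigenvalue of X}`: the symplectic eigenvalues of the
positive definite matrix `M_{XY}` are exactly the eigenvalues of `X`. -/
theorem symplectic_eigenvalues_of_fermi_matrix
    (n : ℕ) (hn : 1 ≤ n) (X Y : Matrix (Fin n) (Fin n) ℝ)
    (hX : X.IsSymm) (hY : Y.IsSymm) (hXpd : X.PosDef) :
    spectrum ℂ ((stdJ n * fermiMatrix X Y).map (Complex.ofReal)) =
      {μ : ℂ | ∃ ω ∈ spectrum ℝ X, μ = Complex.I * (ω : ℂ) ∨ μ = -(Complex.I * (ω : ℂ))} := by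
  classical
  set Xc : Matrix (Fin n) (Fin n) ℂ := X.map Complex.ofReal with hXcdef
  set Yc : Matrix (Fin n) (Fin n) ℂ := Y.map Complex.ofReal with hYcdef
  have hXc_det : Xc.det ≠ 0 := by
    rw [hXcdef, show X.map Complex.ofReal = Complex.ofRealHom.mapMatrix X from rfl,
      ← RingHom.map_det Complex.ofRealHom]
    simpa using hXpd.det_pos.ne'
  have hprod : stdJ n * fermiMatrix X Y = fromBlocks Y 1 (-(X * X + Y * Y)) (-Y) := by
    simp [stdJ, fermiMatrix, Matrix.fromBlocks_multiply]
  have hmapmul : ∀ P Q : Matrix (Fin n) (Fin n) ℝ,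
      (P * Q).map Complex.ofReal = P.map Complex.ofReal * Q.map Complex.ofReal := fun P Q =>
    Matrix.map_mul (f := Complex.ofRealHom)
  have hAc : (stdJ n * fermiMatrix X Y).map Complex.ofReal
      = fromBlocks Yc 1 (-(Xc * Xc + Yc * Yc)) (-Yc) := by
    rw [hprod, Matrix.fromBlocks_map, Matrix.fromBlocks_inj]
    refine ⟨rfl, Matrix.map_one _ Complex.ofReal_zero Complex.ofReal_one, ?_, ?_⟩
    · rw [show (-(X * X + Y * Y)).map Complex.ofReal = -((X * X + Y * Y).map Complex.ofReal) by
        ext i j; simp [Matrix.map_apply],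
        show (X * X + Y * Y).map Complex.ofReal
          = (X * X).map Complex.ofReal + (Y * Y).map Complex.ofReal by
        ext i j; simp [Matrix.map_apply], hmapmul, hmapmul]
    · ext i j; simp [hYcdef, Matrix.map_apply]
  set Lt : Matrix (Fin n ⊕ Fin n) (Fin n ⊕ Fin n) ℂ := fromBlocks Xc 0 Yc 1 with hLtdef
  set K : Matrix (Fin n ⊕ Fin n) (Fin n ⊕ Fin n) ℂ := fromBlocks 0 Xc (-Xc) 0 with hKdef
  set U : Matrix (Fin n ⊕ Fin n) (Fin n ⊕ Fin n) ℂ :=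
    fromBlocks 1 1 (Complex.I • 1) (-(Complex.I • 1)) with hUdef
  set Dg : Matrix (Fin n ⊕ Fin n) (Fin n ⊕ Fin n) ℂ :=
    fromBlocks (Complex.I • Xc) 0 0 ((-Complex.I) • Xc) with hDgdef
  have hLt_det : Lt.det ≠ 0 := by
    rw [hLtdef, Matrix.det_fromBlocks_zero₁₂, Matrix.det_one, mul_one]
    exact hXc_det
  have hU_det : U.det ≠ 0 := by
    rw [hUdef, Matrix.det_fromBlocks_one₁₁]
    have h2 : -(Complex.I • (1 : Matrix (Fin n) (Fin n) ℂ)) - Complex.I • 1 * 1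
        = (-(2 * Complex.I)) • (1 : Matrix (Fin n) (Fin n) ℂ) := by
      rw [Matrix.mul_one]
      module
    rw [h2, Matrix.det_smul, Matrix.det_one, mul_one]
    exact pow_ne_zero _ (by simp [Complex.ext_iff])
  have hconj1 : Lt * ((stdJ n * fermiMatrix X Y).map Complex.ofReal) = K * Lt := by
    rw [hAc, hLtdef, hKdef]
    simp only [Matrix.fromBlocks_multiply]
    rw [Matrix.fromBlocks_inj]
    refine ⟨by noncomm_ring, by noncomm_ring, by noncomm_ring, by noncomm_ring⟩
  have hconj2 : U * Dg = K * U := by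
    rw [hUdef, hDgdef, hKdef]
    simp only [Matrix.fromBlocks_multiply]
    rw [Matrix.fromBlocks_inj]
    refine ⟨?_, ?_, ?_, ?_⟩ <;>
      simp [Matrix.mul_smul, Matrix.smul_mul, smul_smul, Complex.I_mul_I]
  have hDgblocks : ∀ μ : ℂ, μ • (1 : Matrix (Fin n ⊕ Fin n) (Fin n ⊕ Fin n) ℂ) - Dg
      = fromBlocks (μ • 1 - Complex.I • Xc) 0 0 (μ • 1 - (-Complex.I) • Xc) := by
    intro μ
    rw [hDgdef, ← Matrix.fromBlocks_one, Matrix.fromBlocks_smul]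
    ext (i | i) (j | j) <;>
      simp [Matrix.fromBlocks, Matrix.sub_apply]
  have hspec : ∀ μ : ℂ, μ ∈ spectrum ℂ ((stdJ n * fermiMatrix X Y).map Complex.ofReal)
      ↔ ((-Complex.I * μ) ∈ spectrum ℂ Xc ∨ (Complex.I * μ) ∈ spectrum ℂ Xc) := by
    intro μ
    rw [aux_mem_spectrum_iff_det, aux_det_conj hLt_det hconj1 μ,
      ← aux_det_conj hU_det hconj2 μ, hDgblocks μ, Matrix.det_fromBlocks_zero₂₁, mul_eq_zero,
      aux_det_smul_shift μ Complex.I Complex.I_ne_zero,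
      aux_det_smul_shift μ (-Complex.I) (by simpa using Complex.I_ne_zero),
      Complex.inv_I, ← aux_mem_spectrum_iff_det, inv_neg, Complex.inv_I, neg_neg,
      ← aux_mem_spectrum_iff_det]
  ext μ
  rw [Set.mem_setOf_eq, hspec μ, hXcdef, aux_spectrum_map_eq hX]
  constructor
  · rintro (⟨ω, hω, h⟩ | ⟨ω, hω, h⟩)
    · exact ⟨ω, hω, Or.inl ((aux_eq_neg_I_mul _ _).1 h)⟩
    · exact ⟨ω, hω, Or.inr ((aux_eq_I_mul _ _).1 h)⟩
  · rintro ⟨ω, hω, h | h⟩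
    · exact Or.inl ⟨ω, hω, (aux_eq_neg_I_mul _ _).2 h⟩
    · exact Or.inr ⟨ω, hω, (aux_eq_I_mul _ _).2 h⟩
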